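/- arXiv:0903.1137 — 5 statements merged into one kernel-verified Lean document; each statement's English description precedes it below -/
import Mathlib

section
/- Monotonicity of the cup rule: let P and P' be weighted profiles over the same finite set of candidates with the same voters and weights and with odd total weight, and let x be a candidate such that for every voter: (i) the voter's vote in P' orders candidates other than x exactly as in P, and (ii) the voter's vote in P' ranks x above every candidate that the voter ranked x above in P. Then for every cup agenda, if x is the cup winner under P, x is also the cup winner under P'. -/
/-!
Monotonicity of the cup rule: if `x` wins the cup under profile `P` and
`P'` is obtained from `P` by each voter keeping the relative order of the
other candidates and only (possibly) improving `x`'s position, then `x`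
still wins under `P'` (odd total weight, any agenda).
-/

namespace Stmt2

attribute [local instance] Classical.propDecidable

/-- Total weight of voters ranking `x` above `y` in profile `R`. -/
noncomputable def wAbove {V C : Type*} [Fintype V]
    (w : V → ℕ) (R : V → C → C → Prop) (x y : C) : ℕ :=
  ∑ v, if R v x y then w v else 0

/-- A cup agenda: a binary tree with candidates at the leaves. -/
inductive Agenda (C : Type*) where
  | leaf : C → Agenda C
  | node : Agenda C → Agenda C → Agenda C

/-- The leaves of an agenda, left to right. -/
def Agenda.leaves {C : Type*} : Agenda C → List C
  | .leaf c => [c]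
  | .node l r => l.leaves ++ r.leaves

/-- The winner of the cup run on agenda `t`: at each internal node the two
sub-winners meet in a pairwise majority election. -/
noncomputable def Agenda.winner {V C : Type*} [Fintype V]
    (w : V → ℕ) (R : V → C → C → Prop) : Agenda C → C
  | .leaf c => c
  | .node l r =>
      if wAbove w R (l.winner w R) (r.winner w R) >
         wAbove w R (r.winner w R) (l.winner w R)
      then l.winner w R else r.winner w R

lemma winner_mem {V C : Type*} [Fintype V] (w : V → ℕ) (R : V → C → C → Prop)
    (t : Agenda C) : t.winner w R ∈ t.leaves := by
  induction t with
  | leaf c => simp [Agenda.winner, Agenda.leaves]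
  | node l r hl hr =>
    simp only [Agenda.winner, Agenda.leaves, List.mem_append]
    split
    · exact Or.inl hl
    · exact Or.inr hr

lemma wAbove_congr {V C : Type*} [Fintype V] (w : V → ℕ) (R R' : V → C → C → Prop)
    (a b : C) (h : ∀ v, R v a b ↔ R' v a b) : wAbove w R a b = wAbove w R' a b := by
  unfold wAbove
  exact Finset.sum_congr rfl fun v _ => by rw [h v]

lemma wAbove_mono {V C : Type*} [Fintype V] (w : V → ℕ) (R R' : V → C → C → Prop)
    (a b : C) (h : ∀ v, R v a b → R' v a b) : wAbove w R a b ≤ wAbove w R' a b := by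
  unfold wAbove
  refine Finset.sum_le_sum fun v _ => ?_
  by_cases hv : R v a b
  · rw [if_pos hv, if_pos (h v hv)]
  · rw [if_neg hv]; exact Nat.zero_le _

lemma wAbove_add {V C : Type*} [Fintype V] (w : V → ℕ) (R : V → C → C → Prop)
    (hR : ∀ v, IsStrictTotalOrder C (R v)) (a b : C) (hab : a ≠ b) :
    wAbove w R a b + wAbove w R b a = ∑ v, w v := by
  unfold wAbove
  rw [← Finset.sum_add_distrib]
  refine Finset.sum_congr rfl fun v _ => ?_
  have hasymm : ¬ (R v a b ∧ R v b a) := fun ⟨h1, h2⟩ =>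
    (hR v).irrefl a ((hR v).trans _ _ _ h1 h2)
  rcases (by by_cases h1 : R v a b; exact Or.inl h1; by_cases h2 : R v b a; exact Or.inr (Or.inr h2); exact Or.inr (Or.inl ((hR v).trichotomous a b h1 h2)) : R v a b ∨ a = b ∨ R v b a) with h | h | h
  · rw [if_pos h, if_neg (fun h2 => hasymm ⟨h, h2⟩)]; omega
  · exact absurd h hab
  · rw [if_neg (fun h2 => hasymm ⟨h2, h⟩), if_pos h]; omega

lemma winner_congr {V C : Type*} [Fintype V] (w : V → ℕ) (P P' : V → C → C → Prop)
    (x : C) (hsame : ∀ v a b, a ≠ x → b ≠ x → (P' v a b ↔ P v a b))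
    (t : Agenda C) (hx : x ∉ t.leaves) : t.winner w P' = t.winner w P := by
  induction t with
  | leaf c => rfl
  | node l r hl hr =>
    simp only [Agenda.leaves, List.mem_append, not_or] at hx
    have hl' := hl hx.1
    have hr' := hr hx.2
    have ha : l.winner w P ≠ x := fun h => hx.1 (h ▸ winner_mem w P l)
    have hb : r.winner w P ≠ x := fun h => hx.2 (h ▸ winner_mem w P r)
    have e1 : wAbove w P' (l.winner w P) (r.winner w P)
        = wAbove w P (l.winner w P) (r.winner w P) :=
      wAbove_congr _ _ _ _ _ fun v => hsame v _ _ ha hb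
    have e2 : wAbove w P' (r.winner w P) (l.winner w P)
        = wAbove w P (r.winner w P) (l.winner w P) :=
      wAbove_congr _ _ _ _ _ fun v => hsame v _ _ hb ha
    simp only [Agenda.winner, hl', hr', e1, e2]

theorem cup_monotone {V C : Type*} [Fintype V] [Fintype C] [DecidableEq C]
    (w : V → ℕ) (hw : ∀ v, 0 < w v)
    (P P' : V → C → C → Prop)
    (hP : ∀ v, IsStrictTotalOrder C (P v))
    (hP' : ∀ v, IsStrictTotalOrder C (P' v))
    (hodd : Odd (∑ v, w v))
    (x : C)
    (hsame : ∀ v a b, a ≠ x → b ≠ x → (P' v a b ↔ P v a b))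
    (hup : ∀ v a, P v x a → P' v x a)
    (t : Agenda C) (htn : t.leaves.Nodup) (hta : ∀ c, c ∈ t.leaves)
    (hwin : t.winner w P = x) :
    t.winner w P' = x := by
  clear hta
  induction t with
  | leaf c => simpa [Agenda.winner] using hwin
  | node l r hl hr =>
    rw [Agenda.leaves, List.nodup_append] at htn
    obtain ⟨hln, hrn, hdisj⟩ := htn
    rw [Agenda.winner] at hwin ⊢
    by_cases hc : wAbove w P (l.winner w P) (r.winner w P) >
        wAbove w P (r.winner w P) (l.winner w P)
    · -- x = left winner
      rw [if_pos hc] at hwin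
      have hxl : x ∈ l.leaves := hwin ▸ winner_mem w P l
      have hxr : x ∉ r.leaves := fun h => hdisj x hxl x h rfl
      have hl' : l.winner w P' = x := hl hln hwin
      have hr' : r.winner w P' = r.winner w P := winner_congr w P P' x hsame r hxr
      set b := r.winner w P with hb
      have hbx : b ≠ x := fun h => hxr (h ▸ winner_mem w P r)
      rw [hwin] at hc
      have h1 : wAbove w P x b ≤ wAbove w P' x b := wAbove_mono _ _ _ _ _ fun v => hup v b
      have h2 : wAbove w P x b + wAbove w P b x = ∑ v, w v :=
        wAbove_add w P hP x b (Ne.symm hbx)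
      have h3 : wAbove w P' x b + wAbove w P' b x = ∑ v, w v :=
        wAbove_add w P' hP' x b (Ne.symm hbx)
      have hc' : wAbove w P' x b > wAbove w P' b x := by omega
      rw [hl', hr', if_pos hc']
    · -- x = right winner
      rw [if_neg hc] at hwin
      have hxr : x ∈ r.leaves := hwin ▸ winner_mem w P r
      have hxl : x ∉ l.leaves := fun h => hdisj x h x hxr rfl
      have hr' : r.winner w P' = x := hr hrn hwin
      have hl' : l.winner w P' = l.winner w P := winner_congr w P P' x hsame l hxl
      set b := l.winner w P with hb
      have hbx : b ≠ x := fun h => hxl (h ▸ winner_mem w P l)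
      rw [hwin] at hc
      have h1 : wAbove w P x b ≤ wAbove w P' x b := wAbove_mono _ _ _ _ _ fun v => hup v b
      have h2 : wAbove w P x b + wAbove w P b x = ∑ v, w v :=
        wAbove_add w P hP x b (Ne.symm hbx)
      have h3 : wAbove w P' x b + wAbove w P' b x = ∑ v, w v :=
        wAbove_add w P' hP' x b (Ne.symm hbx)
      have hc' : ¬ wAbove w P' b x > wAbove w P' x b := by omega
      rw [hl', hr', if_neg hc']

end Stmt2
end

section
/- Let an incomplete weighted profile over a finite set of at least two candidates have odd total weight W. A candidate c is the Condorcet winner in every completion of the profile if and only if for every candidate d ≠ c, the total weight of voters whose partial order ranks c above d is greater than W/2. -/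
/-!
For an incomplete weighted profile with odd total weight `W` over at least
two candidates, `c` is the Condorcet winner in every completion iff for
every other candidate `d`, the weight of voters already ranking `c` above
`d` exceeds `W/2`.
-/

namespace Stmt3

attribute [local instance] Classical.propDecidable

/-- Total weight of voters ranking `x` above `y` in (possibly partial)
profile `R`. -/
noncomputable def wAbove {V C : Type*} [Fintype V]
    (w : V → ℕ) (R : V → C → C → Prop) (x y : C) : ℕ :=
  ∑ v, if R v x y then w v else 0

/-- Any strict order extends to a strict total order (Szpilrajn). -/
theorem exists_strict_total_ext {C : Type*} (r : C → C → Prop)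
    (hirr : ∀ a, ¬ r a a) (htr : ∀ a b c, r a b → r b c → r a c) :
    ∃ s : C → C → Prop, IsStrictTotalOrder C s ∧ ∀ a b, r a b → s a b := by
  classical
  let r' : C → C → Prop := fun a b => r a b ∨ a = b
  haveI : IsRefl C r' := ⟨fun a => Or.inr rfl⟩
  haveI : IsTrans C r' := by
    constructor
    rintro a b c (h1 | rfl) (h2 | rfl)
    · exact Or.inl (htr _ _ _ h1 h2)
    · exact Or.inl h1
    · exact Or.inl h2
    · exact Or.inr rfl
  haveI : IsAntisymm C r' := by
    constructor
    rintro a b (h1 | rfl) (h2 | h2)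
    · exact absurd (htr _ _ _ h1 h2) (hirr a)
    · exact h2.symm
    · rfl
    · rfl
  haveI : IsPreorder C r' := ⟨⟩
  haveI : IsPartialOrder C r' := ⟨⟩
  obtain ⟨t, ht, hle⟩ := extend_partialOrder r'
  refine ⟨fun a b => t a b ∧ a ≠ b, ?_, ?_⟩
  · haveI h1 : IsIrrefl C (fun a b => t a b ∧ a ≠ b) := ⟨fun a h => h.2 rfl⟩
    haveI h2 : IsTrans C (fun a b => t a b ∧ a ≠ b) := by
      constructor
      rintro a b c ⟨h1, _⟩ ⟨h2, hbc⟩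
      refine ⟨ht.trans _ _ _ h1 h2, fun h => ?_⟩
      subst h
      exact hbc (ht.antisymm _ _ h2 h1)
    haveI h3 : IsTrichotomous C (fun a b => t a b ∧ a ≠ b) := by
      apply Std.trichotomous_of_rel_or_eq_or_rel_swap
      intro a b
      by_cases hab : a = b
      · exact Or.inr (Or.inl hab)
      · rcases ht.total a b with h | h
        · exact Or.inl ⟨h, hab⟩
        · exact Or.inr (Or.inr ⟨h, Ne.symm hab⟩)
    haveI h4 : IsStrictOrder C (fun a b => t a b ∧ a ≠ b) := ⟨⟩
    exact ⟨⟩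
  · intro a b hab
    refine ⟨hle _ _ (Or.inl hab), fun h => ?_⟩
    subst h; exact hirr a hab

theorem condorcet_winner_fixed_iff {V C : Type*} [Fintype V] [Fintype C] [Nontrivial C]
    (w : V → ℕ) (hw : ∀ v, 0 < w v)
    (hodd : Odd (∑ v, w v))
    (Q : V → C → C → Prop) (hQ : ∀ v, IsStrictOrder C (Q v))
    (c : C) :
    (∀ R : V → C → C → Prop,
        (∀ v, IsStrictTotalOrder C (R v)) →
        (∀ v a b, Q v a b → R v a b) →
        ∀ d, d ≠ c → wAbove w R c d > wAbove w R d c)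
    ↔ (∀ d, d ≠ c → (wAbove w Q c d : ℚ) > (∑ v, w v : ℕ) / 2) := by
  classical
  set W := ∑ v, w v with hW
  -- key fact: for a strict total order completion, the two weights sum to W
  have hsum : ∀ (R : V → C → C → Prop), (∀ v, IsStrictTotalOrder C (R v)) →
      ∀ x y : C, x ≠ y → wAbove w R x y + wAbove w R y x = W := by
    intro R hR x y hxy
    unfold wAbove
    rw [hW, ← Finset.sum_add_distrib]
    apply Finset.sum_congr rfl
    intro v _
    rcases (haveI := hR v; trichotomous (r := R v) x y) with h | h | h
    · rw [if_pos h, if_neg, add_zero]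
      intro h'
      exact (hR v).irrefl x ((hR v).trans _ _ _ h h')
    · exact absurd h hxy
    · rw [if_neg, if_pos h, zero_add]
      intro h'
      exact (hR v).irrefl x ((hR v).trans _ _ _ h' h)
  constructor
  · -- forward: contrapositive via crafted completion
    intro hall d hdc
    by_contra hle
    push_neg at hle
    -- since W is odd, 2 * wAbove w Q c d < W
    have h2 : 2 * wAbove w Q c d < W := by
      have : (2 : ℚ) * (wAbove w Q c d : ℚ) ≤ (W : ℚ) := by
        have := hle
        linarith [hle]
      have h2' : 2 * wAbove w Q c d ≤ W := by exact_mod_cast this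
      rcases lt_or_eq_of_le h2' with h | h
      · exact h
      · exfalso
        rcases hodd with ⟨k, hk⟩
        omega
    -- build completion R : extend Q v ∪ {(d,c)} when possible
    have hRv : ∀ v, ∃ s : C → C → Prop, IsStrictTotalOrder C s ∧
        (∀ a b, Q v a b → s a b) ∧ (¬ Q v c d → s d c) := by
      intro v
      by_cases hcd : Q v c d
      · obtain ⟨s, hs, hext⟩ := exists_strict_total_ext (Q v)
          (fun a => (hQ v).irrefl a) (fun a b c h1 h2 => (hQ v).trans _ _ _ h1 h2)
        exact ⟨s, hs, hext, fun h => absurd hcd h⟩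
      · -- transitive closure of Q v ∪ {(d,c)}
        set r : C → C → Prop := Relation.TransGen (fun a b => Q v a b ∨ (a = d ∧ b = c))
          with hr
        have hQtrans : ∀ a b, Relation.TransGen (Q v) a b → Q v a b := by
          intro a b h
          induction h with
          | single h => exact h
          | tail _ h ih => exact (hQ v).trans _ _ _ ih h
        -- characterize r a b when no (d,c) edge used... show r irreflexive
        have hkey : ∀ a b, r a b → Q v a b ∨
            ((Q v a d ∨ a = d) ∧ (Q v c b ∨ c = b)) := by
          intro a b h
          induction h with
          | single h =>
            rcases h with h | ⟨rfl, rfl⟩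
            · exact Or.inl h
            · exact Or.inr ⟨Or.inr rfl, Or.inr rfl⟩
          | tail _ h ih =>
            rename_i b' c' hbc'
            rcases h with h | ⟨rfl, rfl⟩
            · rcases ih with ih | ⟨ih1, ih2⟩
              · exact Or.inl ((hQ v).trans _ _ _ ih h)
              · refine Or.inr ⟨ih1, ?_⟩
                rcases ih2 with h2 | rfl
                · exact Or.inl ((hQ v).trans _ _ _ h2 h)
                · exact Or.inl h
            · rcases ih with ih | ⟨ih1, ih2⟩
              · exact Or.inr ⟨Or.inl ih, Or.inr rfl⟩
              · refine Or.inr ⟨ih1, Or.inr rfl⟩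
        have hirr : ∀ a, ¬ r a a := by
          intro a ha
          rcases hkey a a ha with h | ⟨h1, h2⟩
          · exact (hQ v).irrefl a h
          · rcases h1 with h1 | h1 <;> rcases h2 with h2 | h2
            · exact hcd ((hQ v).trans _ _ _ h2 h1)
            · exact hcd (h2 ▸ h1)
            · exact hcd (h1 ▸ h2)
            · exact hdc (h2.trans h1).symm
        obtain ⟨s, hs, hext⟩ := exists_strict_total_ext r hirr
          (fun a b c h1 h2 => Relation.TransGen.trans h1 h2)
        refine ⟨s, hs, fun a b h => hext _ _ (Relation.TransGen.single (Or.inl h)), ?_⟩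
        intro _
        exact hext _ _ (Relation.TransGen.single (Or.inr ⟨rfl, rfl⟩))
    choose R hR1 hR2 hR3 using hRv
    have hRcd : wAbove w R c d = wAbove w Q c d := by
      unfold wAbove
      apply Finset.sum_congr rfl
      intro v _
      by_cases hcd : Q v c d
      · rw [if_pos (hR2 v c d hcd), if_pos hcd]
      · rw [if_neg, if_neg hcd]
        intro h
        exact (hR1 v).irrefl c ((hR1 v).trans _ _ _ h (hR3 v hcd))
    have := hall R hR1 hR2 d hdc
    have hsum' := hsum R hR1 c d (Ne.symm hdc)
    omega
  · -- backward
    intro hbig R hR hext d hdc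
    have h1 : wAbove w Q c d ≤ wAbove w R c d := by
      unfold wAbove
      apply Finset.sum_le_sum
      intro v _
      by_cases h : Q v c d
      · rw [if_pos h, if_pos (hext v c d h)]
      · simp [h]
    have h2 : (wAbove w Q c d : ℚ) > (W : ℚ) / 2 := hbig d hdc
    have hsum' := hsum R hR c d (Ne.symm hdc)
    have : 2 * wAbove w Q c d > W := by
      have : (2 : ℚ) * (wAbove w Q c d : ℚ) > (W : ℚ) := by linarith
      exact_mod_cast this
    omega

end Stmt3
end

section
/- Let an incomplete weighted profile over a finite set of at least two candidates have odd total weight W. No completion of the profile has a Condorcet winner if and only if for every candidate c there exists a candidate d ≠ c such that the total weight of voters whose partial order ranks d above c is greater than W/2. -/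
/-!
For an incomplete weighted profile with odd total weight `W` over at least
two candidates, no completion has a Condorcet winner iff for every
candidate `c` there is a candidate `d ≠ c` such that the weight of voters
already ranking `d` above `c` exceeds `W/2`.
-/

namespace Stmt4

attribute [local instance] Classical.propDecidable

/-- Total weight of voters ranking `x` above `y` in (possibly partial)
profile `R`. -/
noncomputable def wAbove {V C : Type*} [Fintype V]
    (w : V → ℕ) (R : V → C → C → Prop) (x y : C) : ℕ :=
  ∑ v, if R v x y then w v else 0

section Aux

/-- Szpilrajn extension for strict orders. -/
lemma exists_ext {α : Type*} (Q : α → α → Prop) (h : IsStrictOrder α Q) :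
    ∃ R : α → α → Prop, IsStrictTotalOrder α R ∧ ∀ a b, Q a b → R a b := by
  haveI := h
  let r : α → α → Prop := fun a b => Q a b ∨ a = b
  haveI : IsRefl α r := ⟨fun a => Or.inr rfl⟩
  haveI : IsTrans α r := ⟨by
    rintro a b c (hab | rfl) (hbc | rfl)
    · exact Or.inl (trans_of Q hab hbc)
    · exact Or.inl hab
    · exact Or.inl hbc
    · exact Or.inr rfl⟩
  haveI : IsPreorder α r := ⟨⟩
  haveI : IsAntisymm α r := ⟨by
    rintro a b (hab | hab) (hba | hba)
    · exact absurd (trans_of Q hab hba) (irrefl_of Q a)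
    · exact hba.symm
    · exact hab
    · exact hab⟩
  haveI : IsPartialOrder α r := ⟨⟩
  obtain ⟨s, hs, hrs⟩ := extend_partialOrder r
  haveI := hs
  set S : α → α → Prop := fun a b => s a b ∧ a ≠ b with hS
  haveI : IsTrichotomous α S := ⟨by
    intro a b
    suffices hsuf : S a b ∨ a = b ∨ S b a by
      intro h1 h2
      rcases hsuf with h | h | h
      · exact absurd h h1
      · exact h
      · exact absurd h h2
    by_cases hab : a = b
    · exact Or.inr (Or.inl hab)
    · rcases total_of s a b with h' | h'
      · exact Or.inl ⟨h', hab⟩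
      · exact Or.inr (Or.inr ⟨h', Ne.symm hab⟩)⟩
  haveI : IsIrrefl α S := ⟨by rintro a ⟨-, h⟩; exact h rfl⟩
  haveI : IsTrans α S := ⟨by
    rintro a b c ⟨hab, hab'⟩ ⟨hbc, hbc'⟩
    refine ⟨trans_of s hab hbc, ?_⟩
    rintro rfl
    exact hab' (antisymm_of s hab hbc)⟩
  haveI : IsStrictOrder α S := ⟨⟩
  refine ⟨S, ⟨⟩, ?_⟩
  intro a b hab
  refine ⟨hrs a b (Or.inl hab), ?_⟩
  rintro rfl
  exact irrefl_of Q a hab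

/-- Extend a strict order to a strict total order in which `c` is above
everything not already required to be above `c`. -/
lemma promote {α : Type*} (Q : α → α → Prop) (hQ : IsStrictOrder α Q) (c : α) :
    ∃ R : α → α → Prop, IsStrictTotalOrder α R ∧ (∀ a b, Q a b → R a b) ∧
      ∀ b, b ≠ c → ¬ Q b c → R c b := by
  haveI := hQ
  set M : α → α → Prop :=
    fun a b => Q a b ∨ ((a = c ∨ Q a c) ∧ ¬ Q b c ∧ b ≠ c) with hM
  have hirr : ∀ a, ¬ M a a := by
    rintro a (h | ⟨rfl | h, h2, h3⟩)
    · exact irrefl_of Q a h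
    · exact h3 rfl
    · exact h2 h
  have htr : ∀ a b c', M a b → M b c' → M a c' := by
    rintro a b e (hab | ⟨hac, hbc, hb⟩) (hbe | ⟨hbc', hec, he⟩)
    · exact Or.inl (trans_of Q hab hbe)
    · refine Or.inr ⟨Or.inr ?_, hec, he⟩
      rcases hbc' with rfl | hbc'
      · exact hab
      · exact trans_of Q hab hbc'
    · refine Or.inr ⟨hac, ?_, ?_⟩
      · intro h; exact hbc (trans_of Q hbe h)
      · rintro rfl; exact hbc hbe
    · rcases hbc' with rfl | hbc'
      · exact absurd rfl hb
      · exact absurd hbc' hbc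
  haveI : IsIrrefl α M := ⟨hirr⟩
  haveI : IsTrans α M := ⟨htr⟩
  obtain ⟨R, hR, hMR⟩ := exists_ext M ⟨⟩
  · exact ⟨R, hR, fun a b h => hMR _ _ (Or.inl h),
      fun b hb hbc => hMR _ _ (Or.inr ⟨Or.inl rfl, hbc, hb⟩)⟩

lemma wAbove_mono {V C : Type*} [Fintype V] (w : V → ℕ) {Q R : V → C → C → Prop}
    (h : ∀ v a b, Q v a b → R v a b) (x y : C) :
    wAbove w Q x y ≤ wAbove w R x y := by
  refine Finset.sum_le_sum fun v _ => ?_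
  by_cases hq : Q v x y
  · simp [hq, h v x y hq]
  · simp [hq]

lemma wAbove_add_total {V C : Type*} [Fintype V] (w : V → ℕ) {R : V → C → C → Prop}
    (hR : ∀ v, IsStrictTotalOrder C (R v)) {x y : C} (hxy : x ≠ y) :
    wAbove w R x y + wAbove w R y x = ∑ v, w v := by
  rw [wAbove, wAbove, ← Finset.sum_add_distrib]
  refine Finset.sum_congr rfl fun v _ => ?_
  haveI := hR v
  rcases trichotomous_of (R v) x y with h | h | h
  · have h' : ¬ R v y x := fun h' => irrefl_of (R v) x (trans_of (R v) h h')
    simp [h, h']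
  · exact absurd h hxy
  · have h' : ¬ R v x y := fun h' => irrefl_of (R v) x (trans_of (R v) h' h)
    simp [h, h']

lemma half_lt (W n : ℕ) : ((W : ℚ) / 2 < (n : ℚ)) ↔ W < 2 * n := by
  rw [div_lt_iff₀ (by norm_num : (0:ℚ) < 2)]
  constructor
  · intro h
    have : (W : ℚ) < ((2 * n : ℕ) : ℚ) := by push_cast; linarith
    exact_mod_cast this
  · intro h
    have : (W : ℚ) < ((2 * n : ℕ) : ℚ) := by exact_mod_cast h
    push_cast at this; linarith

end Aux

theorem no_condorcet_winner_iff {V C : Type*} [Fintype V] [Fintype C] [Nontrivial C]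
    (w : V → ℕ) (hw : ∀ v, 0 < w v)
    (hodd : Odd (∑ v, w v))
    (Q : V → C → C → Prop) (hQ : ∀ v, IsStrictOrder C (Q v)) :
    (∀ R : V → C → C → Prop,
        (∀ v, IsStrictTotalOrder C (R v)) →
        (∀ v a b, Q v a b → R v a b) →
        ¬ ∃ c, ∀ d, d ≠ c → wAbove w R c d > wAbove w R d c)
    ↔ (∀ c : C, ∃ d, d ≠ c ∧ (wAbove w Q d c : ℚ) > (∑ v, w v : ℕ) / 2) := by
  obtain ⟨k, hk⟩ := hodd
  constructor
  · intro hlhs c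
    by_contra hc
    push_neg at hc
    choose R hR1 hR2 hR3 using fun v => promote (Q v) (hQ v) c
    refine hlhs R hR1 hR2 ⟨c, fun d hd => ?_⟩
    have hdc := hc d hd
    have h2 : 2 * wAbove w Q d c < ∑ v, w v := by
      have h3 : ¬ (∑ v, w v) < 2 * wAbove w Q d c := by
        rw [← half_lt]; exact not_lt.2 hdc
      omega
    have hsplit : wAbove w Q d c + (∑ v, if ¬ Q v d c then w v else 0) = ∑ v, w v := by
      rw [wAbove, ← Finset.sum_add_distrib]
      refine Finset.sum_congr rfl fun v _ => ?_
      by_cases h : Q v d c <;> simp [h]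
    have hge : (∑ v, if ¬ Q v d c then w v else 0) ≤ wAbove w R c d := by
      refine Finset.sum_le_sum fun v _ => ?_
      by_cases h : Q v d c
      · simp [h]
      · simp [h, hR3 v d hd h]
    have htot := wAbove_add_total w hR1 (Ne.symm hd)
    omega
  · rintro hrhs R hR hQR ⟨c, hcd⟩
    obtain ⟨d, hd, hgt⟩ := hrhs c
    have h2 : (∑ v, w v) < 2 * wAbove w Q d c := (half_lt _ _).1 hgt
    have hmono : wAbove w Q d c ≤ wAbove w R d c := wAbove_mono w hQR d c
    have htot := wAbove_add_total w hR (Ne.symm hd)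
    have := hcd d hd
    omega

end Stmt4
end

section
/- Black's theorem for weighted votes: let ≤ be a linear order on a nonempty finite set of candidates, and let a weighted profile have odd total weight with every vote single-peaked with respect to ≤. Then the profile has a Condorcet winner. -/
/-!
Black's theorem for weighted votes: a weighted profile of odd total weight
in which every vote is single peaked with respect to a fixed linear order
on a nonempty finite set of candidates has a Condorcet winner.
-/

namespace Stmt5

attribute [local instance] Classical.propDecidable

/-- Total weight of voters ranking `x` above `y` in profile `R`. -/
noncomputable def wAbove {V C : Type*} [Fintype V]
    (w : V → ℕ) (R : V → C → C → Prop) (x y : C) : ℕ :=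
  ∑ v, if R v x y then w v else 0

/-- A vote `r` (a strict linear order, `r x y` meaning `x` is preferred to
`y`) is single peaked with respect to the linear order on `C`: its top
candidate `p` satisfies `x ≻ y` whenever `p ≤ x < y` or `y < x ≤ p`. -/
def SinglePeaked {C : Type*} [LinearOrder C] (r : C → C → Prop) : Prop :=
  ∃ p : C, (∀ x, x ≠ p → r p x) ∧
    (∀ x y, p ≤ x → x < y → r x y) ∧
    (∀ x y, y < x → x ≤ p → r x y)

theorem black_condorcet_winner_exists {V C : Type*} [Fintype V] [Fintype C]
    [Nonempty C] [LinearOrder C]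
    (w : V → ℕ) (hw : ∀ v, 0 < w v)
    (hodd : Odd (∑ v, w v))
    (R : V → C → C → Prop)
    (hR : ∀ v, IsStrictTotalOrder C (R v))
    (hsp : ∀ v, SinglePeaked (R v)) :
    ∃ c : C, ∀ d, d ≠ c → wAbove w R c d > wAbove w R d c := by
  classical
  set T := ∑ v, w v with hT
  have hT0 : 0 < T := hodd.pos
  choose peak hpeak1 hpeak2 hpeak3 using hsp
  set f : C → ℕ := fun c => ∑ v ∈ Finset.univ.filter (fun v => peak v ≤ c), w v with hf
  -- the sum of the two pairwise tallies is the total weight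
  have hsum : ∀ x y : C, x ≠ y → wAbove w R x y + wAbove w R y x = T := by
    intro x y hxy
    unfold wAbove
    rw [← Finset.sum_add_distrib]
    refine Finset.sum_congr rfl fun v _ => ?_
    have hasym : ¬(R v x y ∧ R v y x) := fun ⟨h1, h2⟩ =>
      (hR v).irrefl x ((hR v).trans _ _ _ h1 h2)
    rcases (show R v x y ∨ x = y ∨ R v y x by
      by_contra hc; push_neg at hc; exact hc.2.1 ((hR v).trichotomous x y hc.1 hc.2.2)) with h | h | h
    · rw [if_pos h, if_neg (fun h2 => hasym ⟨h, h2⟩)]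
      simp
    · exact absurd h hxy
    · rw [if_neg (fun h2 => hasym ⟨h2, h⟩), if_pos h]
      simp
  -- monotone lower bound on a tally from a set of voters all preferring x to y
  have hlb : ∀ (A : Finset V) (x y : C), (∀ v ∈ A, R v x y) →
      (∑ v ∈ A, w v) ≤ wAbove w R x y := by
    intro A x y hA
    unfold wAbove
    calc ∑ v ∈ A, w v = ∑ v ∈ A, (if R v x y then w v else 0) := by
          refine Finset.sum_congr rfl fun v hv => ?_
          simp [hA v hv]
      _ ≤ ∑ v, (if R v x y then w v else 0) :=
          Finset.sum_le_sum_of_subset (Finset.subset_univ A)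
  -- the set of candidates to the right of the weighted median is nonempty
  have hCne : (Finset.univ : Finset C).Nonempty := Finset.univ_nonempty
  set S : Finset C := Finset.univ.filter (fun c => T < 2 * f c) with hS
  have hSne : S.Nonempty := by
    refine ⟨(Finset.univ : Finset C).max' hCne, ?_⟩
    simp only [hS, Finset.mem_filter, Finset.mem_univ, true_and]
    have : f ((Finset.univ : Finset C).max' hCne) = T := by
      simp only [hf]
      rw [hT]
      refine Finset.sum_congr ?_ (fun _ _ => rfl)
      refine Finset.filter_true_of_mem fun v _ => ?_
      exact Finset.le_max' _ _ (Finset.mem_univ _)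
    omega
  set c := S.min' hSne with hc
  have hcS : c ∈ S := S.min'_mem hSne
  have hcprop : T < 2 * f c := by
    have := hcS
    simp only [hS, Finset.mem_filter] at this
    exact this.2
  refine ⟨c, fun d hd => ?_⟩
  have hkey : T < 2 * wAbove w R c d := by
    rcases lt_or_gt_of_ne hd with hdc | hdc
    · -- d < c : all voters with peak ≥ c prefer c to d
      set A : Finset V := Finset.univ.filter (fun v => c ≤ peak v) with hA
      set B : Finset V := Finset.univ.filter (fun v => peak v < c) with hB
      have hAB : (∑ v ∈ A, w v) + (∑ v ∈ B, w v) = T := by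
        rw [hT, ← Finset.sum_filter_add_sum_filter_not Finset.univ (fun v => c ≤ peak v) w]
        congr 1
        refine Finset.sum_congr ?_ (fun _ _ => rfl)
        simp [hB, not_le]
      have hBlt : 2 * (∑ v ∈ B, w v) < T := by
        rcases B.eq_empty_or_nonempty with hBe | hBne
        · simp [hBe]; omega
        · have hne : (B.image peak).Nonempty := hBne.image peak
          set c'' := (B.image peak).max' hne with hc''
          have hc''lt : c'' < c := by
            have := (B.image peak).max'_mem hne
            rw [Finset.mem_image] at this
            obtain ⟨v, hv, hveq⟩ := this
            simp only [hB, Finset.mem_filter] at hv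
            rw [hc'', ← hveq]; exact hv.2
          have hBeq : (∑ v ∈ B, w v) = f c'' := by
            simp only [hf]
            refine Finset.sum_congr ?_ (fun _ _ => rfl)
            ext v
            simp only [hB, Finset.mem_filter, Finset.mem_univ, true_and]
            constructor
            · intro hv
              exact Finset.le_max' _ _ (Finset.mem_image_of_mem peak
                (by simp [hB, hv]))
            · intro hv
              exact lt_of_le_of_lt hv hc''lt
          have hnotS : c'' ∉ S := fun hmem => by
            have := S.min'_le c'' hmem
            rw [← hc] at this
            exact absurd this (not_le.mpr hc''lt)
          have : ¬ (T < 2 * f c'') := by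
            intro h
            exact hnotS (by simp [hS, h])
          push_neg at this
          have hne2 : 2 * f c'' ≠ T := by
            intro h
            rcases hodd with ⟨k, hk⟩
            omega
          omega
      have hApref : ∀ v ∈ A, R v c d := by
        intro v hv
        simp only [hA, Finset.mem_filter] at hv
        exact hpeak3 v c d hdc hv.2
      have := hlb A c d hApref
      omega
    · -- c < d : all voters with peak ≤ c prefer c to d
      have hApref : ∀ v ∈ Finset.univ.filter (fun v => peak v ≤ c), R v c d := by
        intro v hv
        simp only [Finset.mem_filter] at hv
        exact hpeak2 v c d hv.2 hdc
      have := hlb _ c d hApref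
      have hfc : f c = ∑ v ∈ Finset.univ.filter (fun v => peak v ≤ c), w v := rfl
      omega
  have := hsum c d (Ne.symm hd)
  omega

end Stmt5
end

section
/- Optimality of placing a candidate first for Condorcet manipulation: over a finite set of candidates, fix a family of voters with positive integer weights and fixed votes, together with a coalition of additional voters with positive integer weights whose votes may be chosen freely. If there exists an assignment of votes to the coalition voters under which candidate c is the Condorcet winner of the combined profile, then under every assignment in which each coalition voter ranks c first, c is the Condorcet winner of the combined profile. -/
/-!
If some assignment of votes to a weighted coalition makes `c` the Condorcet
winner of the combined profile, then every assignment in which each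
coalition voter ranks `c` first makes `c` the Condorcet winner.
-/

namespace Stmt10

attribute [local instance] Classical.propDecidable

/-- Total weight of voters ranking `x` above `y` in profile `R`. -/
noncomputable def wAbove {V C : Type*} [Fintype V]
    (w : V → ℕ) (R : V → C → C → Prop) (x y : C) : ℕ :=
  ∑ v, if R v x y then w v else 0

theorem condorcet_manipulation_rank_first {C V₁ V₂ : Type*}
    [Fintype C] [Fintype V₁] [Fintype V₂]
    (w₁ : V₁ → ℕ) (hw₁ : ∀ v, 0 < w₁ v)
    (w₂ : V₂ → ℕ) (hw₂ : ∀ v, 0 < w₂ v)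
    (P : V₁ → C → C → Prop) (hP : ∀ v, IsStrictTotalOrder C (P v))
    (c : C)
    (hex : ∃ Q : V₂ → C → C → Prop,
        (∀ v, IsStrictTotalOrder C (Q v)) ∧
        ∀ d, d ≠ c →
          wAbove w₁ P c d + wAbove w₂ Q c d >
          wAbove w₁ P d c + wAbove w₂ Q d c) :
    ∀ Q : V₂ → C → C → Prop,
      (∀ v, IsStrictTotalOrder C (Q v)) →
      (∀ v a, a ≠ c → Q v c a) →
      ∀ d, d ≠ c →
        wAbove w₁ P c d + wAbove w₂ Q c d >
        wAbove w₁ P d c + wAbove w₂ Q d c := by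
  intro Q hQ hQc d hd
  obtain ⟨Q', hQ', h⟩ := hex
  have hcd : wAbove w₂ Q c d = ∑ v, w₂ v := by
    unfold wAbove
    exact Finset.sum_congr rfl fun v _ => if_pos (hQc v d hd)
  have hdc : wAbove w₂ Q d c = 0 := by
    unfold wAbove
    refine Finset.sum_eq_zero fun v _ => if_neg fun hvdc => ?_
    exact irrefl_of (Q v) c (trans_of (Q v) (hQc v d hd) hvdc)
  have h1 : wAbove w₂ Q' c d ≤ ∑ v, w₂ v := by
    unfold wAbove
    exact Finset.sum_le_sum fun v _ => by split <;> simp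
  have := h d hd
  omega

end Stmt10
end
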